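/- For all non-negative integers t ≥ 1, k, and j with j ≥ t: sum_{i=0}^{t-1} (-1)^{t+i+1} binomial(t,i) · binomial(k+j+i, j) = binomial(k+j+t, j) - binomial(k+j, j-t). -/
import Mathlib

lemma diff_choose_aux (t : ℕ) : ∀ m j : ℕ, t ≤ j →
    (∑ i ∈ Finset.range (t + 1),
        (-1 : ℤ) ^ (t + i) * (t.choose i) * ((m + i).choose j))
      = (m.choose (j - t) : ℤ) := by
  induction t with
  | zero => intro m j _; simp
  | succ t ih =>
    intro m j hj
    have hjt : t ≤ j := le_trans (Nat.le_succ t) hj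
    have key : ∑ i ∈ Finset.range (t + 2),
          (-1 : ℤ) ^ (t + 1 + i) * ((t + 1).choose i) * ((m + i).choose j)
        = (∑ i ∈ Finset.range (t + 1),
            (-1 : ℤ) ^ (t + i) * (t.choose i) * ((m + 1 + i).choose j))
          - (∑ i ∈ Finset.range (t + 1),
            (-1 : ℤ) ^ (t + i) * (t.choose i) * ((m + i).choose j)) := by
      have hb : ∑ i ∈ Finset.range (t + 2),
            (-1 : ℤ) ^ (t + i + 1) * (t.choose i) * ((m + i).choose j)
          = - ∑ i ∈ Finset.range (t + 1),
              (-1 : ℤ) ^ (t + i) * (t.choose i) * ((m + i).choose j) := by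
        rw [Finset.sum_range_succ, Nat.choose_succ_self]
        simp only [Nat.cast_zero, mul_zero, zero_mul, add_zero]
        rw [← Finset.sum_neg_distrib]
        apply Finset.sum_congr rfl
        intro i _
        ring
      calc ∑ i ∈ Finset.range (t + 2),
            (-1 : ℤ) ^ (t + 1 + i) * ((t + 1).choose i) * ((m + i).choose j)
          = (∑ i ∈ Finset.range (t + 1),
              (-1 : ℤ) ^ (t + 1 + (i + 1)) * ((t + 1).choose (i + 1)) * ((m + (i + 1)).choose j))
            + (-1 : ℤ) ^ (t + 1 + 0) * ((t + 1).choose 0) * ((m + 0).choose j) := by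
            rw [Finset.sum_range_succ']
        _ = (∑ i ∈ Finset.range (t + 1),
              ((-1 : ℤ) ^ (t + i) * (t.choose i) * ((m + 1 + i).choose j)
                + (-1 : ℤ) ^ (t + (i + 1) + 1) * (t.choose (i + 1)) * ((m + (i + 1)).choose j)))
            + (-1 : ℤ) ^ (t + 0 + 1) * (t.choose 0) * ((m + 0).choose j) := by
            congr 1
            · apply Finset.sum_congr rfl
              intro i _
              rw [Nat.choose_succ_succ]
              push_cast
              have h1 : m + 1 + i = m + (i + 1) := by ring
              rw [h1]
              have h2 : (-1 : ℤ) ^ (t + 1 + (i + 1)) = (-1 : ℤ) ^ (t + i) := by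
                have : t + 1 + (i + 1) = (t + i) + 2 := by ring
                rw [this, pow_add]; ring
              have h3 : (-1 : ℤ) ^ (t + (i + 1) + 1) = (-1 : ℤ) ^ (t + i) := by
                have : t + (i + 1) + 1 = (t + i) + 2 := by ring
                rw [this, pow_add]; ring
              rw [h2, h3]; ring
            · simp
        _ = (∑ i ∈ Finset.range (t + 1),
              (-1 : ℤ) ^ (t + i) * (t.choose i) * ((m + 1 + i).choose j))
            + ((∑ i ∈ Finset.range (t + 1),
              (-1 : ℤ) ^ (t + (i + 1) + 1) * (t.choose (i + 1)) * ((m + (i + 1)).choose j))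
              + (-1 : ℤ) ^ (t + 0 + 1) * (t.choose 0) * ((m + 0).choose j)) := by
            rw [Finset.sum_add_distrib]; ring
        _ = (∑ i ∈ Finset.range (t + 1),
              (-1 : ℤ) ^ (t + i) * (t.choose i) * ((m + 1 + i).choose j))
            + ∑ i ∈ Finset.range (t + 2),
              (-1 : ℤ) ^ (t + i + 1) * (t.choose i) * ((m + i).choose j) := by
            congr 1
            exact (Finset.sum_range_succ' (fun i => (-1 : ℤ) ^ (t + i + 1) * (t.choose i) * ((m + i).choose j)) (t + 1)).symm
        _ = _ := by rw [hb]; ring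
    rw [key, ih m j hjt, ih (m + 1) j hjt]
    have hr : j - t = (j - (t + 1)) + 1 := by omega
    rw [hr, Nat.choose_succ_succ]
    push_cast
    ring

theorem alternating_binom_partial_ge (t k j : ℕ) (ht : 1 ≤ t) (hj : t ≤ j) :
    (∑ i ∈ Finset.range t,
        (-1 : ℤ) ^ (t + i + 1) * (t.choose i) * ((k + j + i).choose j))
      = ((k + j + t).choose j : ℤ) - ((k + j).choose (j - t) : ℤ) := by
  have h := diff_choose_aux t (k + j) j hj
  rw [Finset.sum_range_succ] at h
  have hsign : (-1 : ℤ) ^ (t + t) = 1 := by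
    have : t + t = 2 * t := by ring
    rw [this, pow_mul]; norm_num
  rw [hsign, Nat.choose_self] at h
  have hneg : ∑ i ∈ Finset.range t,
      (-1 : ℤ) ^ (t + i + 1) * (t.choose i) * ((k + j + i).choose j)
      = - ∑ i ∈ Finset.range t,
        (-1 : ℤ) ^ (t + i) * (t.choose i) * ((k + j + i).choose j) := by
    rw [← Finset.sum_neg_distrib]
    apply Finset.sum_congr rfl
    intro i _
    rw [pow_succ]; ring
  rw [hneg]
  push_cast at h ⊢
  linarith
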